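/- Let F be a distribution function. The following are equivalent: (a) there exist aₙ > 0 and bₙ ∈ ℝ such that for every x ∈ ℝ, F^{⊡n}(aₙ·x + bₙ) → max(1 − exp(−x), 0) as n → ∞; (b) there exist aₙ > 0 and bₙ ∈ ℝ such that for every x ∈ ℝ, F(aₙ·x + bₙ)^n → exp(−exp(−x)) as n → ∞. Moreover, there exists a single choice of sequences aₙ > 0, bₙ ∈ ℝ for which both limits hold simultaneously. -/

import Mathlib

open Filter Topology

def IsDistFun (F : ℝ → ℝ) : Prop :=
  Monotone F ∧ (∀ x, ContinuousWithinAt F (Set.Ici x) x) ∧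
    Tendsto F atBot (𝓝 0) ∧ Tendsto F atTop (𝓝 1)

noncomputable def freePow (F : ℝ → ℝ) (n : ℕ) (x : ℝ) : ℝ :=
  max ((n : ℝ) * F x - ((n : ℝ) - 1)) 0

noncomputable def expDF (x : ℝ) : ℝ := max (1 - Real.exp (-x)) 0

lemma tendsto_log_div_slope : Tendsto (fun y : ℝ => Real.log y / (y - 1)) (𝓝[≠] (1:ℝ)) (𝓝 1) := by
  have h2 := hasDerivAt_iff_tendsto_slope.mp (Real.hasDerivAt_log one_ne_zero)
  have : (fun y : ℝ => Real.log y / (y - 1)) = slope Real.log 1 := by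
    funext y
    simp [slope_def_field, div_eq_inv_mul, Real.log_one]
  rw [this]
  simpa using h2

lemma tendsto_div_log_slope : Tendsto (fun y : ℝ => (y - 1) / Real.log y) (𝓝[≠] (1:ℝ)) (𝓝 1) := by
  have := (tendsto_log_div_slope).inv₀ one_ne_zero
  simp only [inv_div] at this
  simpa using this

lemma pow_tendsto_of_lin (c : ℕ → ℝ) (τ : ℝ) (hτ : 0 < τ)
    (hc : Tendsto c atTop (𝓝 τ)) :
    Tendsto (fun n : ℕ => (1 - c n / n) ^ n) atTop (𝓝 (Real.exp (-τ))) := by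
  set f : ℕ → ℝ := fun n => 1 - c n / n with hf
  have hs : Tendsto (fun n : ℕ => -(c n / n)) atTop (𝓝 0) := by
    have := hc.div_atTop tendsto_natCast_atTop_atTop
    simpa using this.neg
  have hev : ∀ᶠ n : ℕ in atTop, 0 < c n ∧ c n / (n:ℝ) < 1/2 ∧ 1 ≤ n := by
    have h1 : ∀ᶠ n : ℕ in atTop, 0 < c n := hc.eventually (eventually_gt_nhds hτ)
    have h2 : ∀ᶠ n : ℕ in atTop, c n / (n:ℝ) < 1/2 := by
      have := (hc.div_atTop tendsto_natCast_atTop_atTop)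
      exact this.eventually (eventually_lt_nhds (by norm_num : (0:ℝ) < 1/2))
    filter_upwards [h1, h2, eventually_ge_atTop 1] with n a b c using ⟨a, b, c⟩
  have hy : Tendsto (fun n : ℕ => 1 + (-(c n / n))) atTop (𝓝[≠] (1:ℝ)) := by
    rw [tendsto_nhdsWithin_iff]
    constructor
    · simpa using (tendsto_const_nhds.add hs)
    · filter_upwards [hev] with n ⟨h1, h2, h3⟩
      have hn : (0:ℝ) < n := by exact_mod_cast h3
      have : 0 < c n / n := div_pos h1 hn
      simp only [Set.mem_compl_iff, Set.mem_singleton_iff]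
      intro h
      nlinarith
  have hratio : Tendsto (fun n : ℕ => Real.log (1 + (-(c n / n))) / (-(c n / n)))
      atTop (𝓝 1) := by
    have := tendsto_log_div_slope.comp hy
    apply this.congr
    intro n
    simp [Function.comp]
  have hg : Tendsto (fun n : ℕ => (n:ℝ) * Real.log (f n)) atTop (𝓝 (-τ)) := by
    have hmul : Tendsto (fun n : ℕ => (-(c n)) * (Real.log (1 + (-(c n / n))) / (-(c n / n))))
        atTop (𝓝 ((-τ) * 1)) := (hc.neg).mul hratio
    rw [mul_one] at hmul
    apply hmul.congr'
    filter_upwards [hev] with n ⟨h1, h2, h3⟩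
    have hn : (0:ℝ) < n := by exact_mod_cast h3
    have hne : c n / (n:ℝ) ≠ 0 := ne_of_gt (div_pos h1 hn)
    have : (1 : ℝ) + (-(c n / n)) = f n := by simp [hf]; ring
    rw [this]
    field_simp
  have hfinal : Tendsto (fun n : ℕ => Real.exp ((n:ℝ) * Real.log (f n))) atTop
      (𝓝 (Real.exp (-τ))) := (Real.continuous_exp.tendsto _).comp hg
  apply hfinal.congr'
  filter_upwards [hev] with n ⟨h1, h2, h3⟩
  have hn : (0:ℝ) < n := by exact_mod_cast h3
  have hfpos : 0 < f n := by
    simp only [hf]; nlinarith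
  rw [Real.exp_nat_mul, Real.exp_log hfpos]

lemma lin_tendsto_of_pow (f : ℕ → ℝ) (hf0 : ∀ n, 0 ≤ f n) (L : ℝ) (hL0 : 0 < L) (hL1 : L < 1)
    (h : Tendsto (fun n : ℕ => f n ^ n) atTop (𝓝 L)) :
    Tendsto (fun n : ℕ => (n:ℝ) * (1 - f n)) atTop (𝓝 (-Real.log L)) := by
  have hlogL : Real.log L < 0 := Real.log_neg hL0 hL1
  have hfpos : ∀ᶠ n : ℕ in atTop, 0 < f n := by
    have hev := h.eventually (eventually_gt_nhds (by linarith : (0:ℝ) < L) |>.mono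
      (fun y hy => hy))
    filter_upwards [hev, eventually_ge_atTop 1] with n h1 h2
    rcases (hf0 n).lt_or_eq with h | h
    · exact h
    · exfalso; rw [← h] at h1
      rw [zero_pow (by omega : n ≠ 0)] at h1; linarith
  have hnlog : Tendsto (fun n : ℕ => (n:ℝ) * Real.log (f n)) atTop (𝓝 (Real.log L)) := by
    have := h.log (ne_of_gt hL0)
    apply this.congr
    intro n
    rw [Real.log_pow]
  have hlog0 : Tendsto (fun n : ℕ => Real.log (f n)) atTop (𝓝 0) := by
    have := hnlog.div_atTop tendsto_natCast_atTop_atTop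
    apply this.congr'
    filter_upwards [eventually_ge_atTop 1] with n hn
    have : (0:ℝ) < n := by exact_mod_cast hn
    field_simp
  have hf1 : Tendsto f atTop (𝓝 1) := by
    have := (Real.continuous_exp.tendsto _).comp hlog0
    simp only [Function.comp, Real.exp_zero] at this
    apply this.congr'
    filter_upwards [hfpos] with n hn
    simp only [Function.comp]
    rw [Real.exp_log hn]
  have hlneg : ∀ᶠ n : ℕ in atTop, Real.log (f n) < 0 := by
    have hev := hnlog.eventually (eventually_lt_nhds hlogL)
    filter_upwards [hev, eventually_ge_atTop 1] with n h1 h2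
    have hn : (0:ℝ) < n := by exact_mod_cast h2
    nlinarith
  have hfne1 : ∀ᶠ n : ℕ in atTop, f n ≠ 1 := by
    filter_upwards [hlneg] with n hn
    intro h; rw [h] at hn; simp [Real.log_one] at hn
  have hy : Tendsto f atTop (𝓝[≠] (1:ℝ)) := by
    rw [tendsto_nhdsWithin_iff]
    exact ⟨hf1, hfne1.mono fun n hn => hn⟩
  have hratio : Tendsto (fun n : ℕ => (f n - 1) / Real.log (f n)) atTop (𝓝 1) := by
    have := tendsto_div_log_slope.comp hy
    apply this.congr; intro n; simp [Function.comp]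
  have hmul : Tendsto (fun n : ℕ => ((n:ℝ) * (-Real.log (f n))) * ((f n - 1) / Real.log (f n)))
      atTop (𝓝 ((-Real.log L) * 1)) := by
    exact (by have := hnlog.neg; exact this.congr (fun n => by ring) : Tendsto (fun n : ℕ => (n:ℝ) * (-Real.log (f n))) atTop (𝓝 (-Real.log L))).mul hratio
  rw [mul_one] at hmul
  apply hmul.congr'
  filter_upwards [hlneg] with n hn
  have : Real.log (f n) ≠ 0 := ne_of_lt hn
  field_simp
  ring

lemma key_step1 (F : ℝ → ℝ) (a b : ℕ → ℝ)
    (h : ∀ x : ℝ, Tendsto (fun n => freePow F n (a n * x + b n)) atTop (𝓝 (expDF x))) :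
    ∀ x : ℝ, 0 < x →
      Tendsto (fun n : ℕ => (n:ℝ) * (1 - F (a n * x + b n))) atTop (𝓝 (Real.exp (-x))) := by
  intro x hx
  have hE : Real.exp (-x) < 1 := by
    rw [Real.exp_lt_one_iff]; linarith
  have hpos : 0 < 1 - Real.exp (-x) := by linarith
  have hEDF : expDF x = 1 - Real.exp (-x) := by
    rw [expDF, max_eq_left]; linarith
  have hx' := h x
  rw [hEDF] at hx'
  have hev : ∀ᶠ n : ℕ in atTop,
      freePow F n (a n * x + b n) = 1 - (n:ℝ) * (1 - F (a n * x + b n)) := by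
    filter_upwards [hx'.eventually (eventually_gt_nhds hpos)] with n hn
    rw [freePow] at hn ⊢
    have hkey : (n:ℝ) * F (a n * x + b n) - ((n:ℝ) - 1)
        = 1 - (n:ℝ) * (1 - F (a n * x + b n)) := by ring
    rw [hkey] at hn ⊢
    rcases le_or_gt (1 - (n:ℝ) * (1 - F (a n * x + b n))) 0 with hc | hc
    · rw [max_eq_right hc] at hn; linarith
    · rw [max_eq_left hc.le]
  have h1 : Tendsto (fun n : ℕ => 1 - (n:ℝ) * (1 - F (a n * x + b n))) atTop
      (𝓝 (1 - Real.exp (-x))) := hx'.congr' hev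
  have h2 := (tendsto_const_nhds (x := (1:ℝ)) (f := atTop (α := ℕ))).sub h1
  simp only [sub_sub_cancel] at h2
  exact h2
lemma key (F : ℝ → ℝ) (hmono : Monotone F) (a b : ℕ → ℝ) (ha : ∀ n, 0 < a n)
    (h : ∀ x : ℝ, Tendsto (fun n => freePow F n (a n * x + b n)) atTop (𝓝 (expDF x)))
    (x : ℝ) :
    Tendsto (fun n : ℕ => (n:ℝ) * (1 - F (a n * x + b n))) atTop (𝓝 (Real.exp (-x))) := by
  have step1 := key_step1 F a b h
  -- choose k
  set k : ℕ := ⌈Real.exp (-x)⌉₊ + 2 with hkdef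
  have hk2 : 2 ≤ k := by omega
  have hk1 : (1:ℝ) ≤ (k:ℝ) := by exact_mod_cast Nat.one_le_iff_ne_zero.2 (by omega)
  have hk0 : (0:ℝ) < (k:ℝ) := by linarith
  have hkx : Real.exp (-x) < (k:ℝ) := by
    have := Nat.le_ceil (Real.exp (-x))
    have h2 : ((⌈Real.exp (-x)⌉₊ : ℝ)) < (k:ℝ) := by
      rw [hkdef]; push_cast; linarith
    linarith
  have hkpos : 0 < k := by omega
  have hL : 0 < x + Real.log k := by
    have : -x < Real.log k := (Real.lt_log_iff_exp_lt hk0).2 hkx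
    linarith
  have hkexp : ∀ u : ℝ, (k:ℝ) * Real.exp (-u) = Real.exp (Real.log k - u) := by
    intro u
    rw [Real.exp_sub, Real.exp_log hk0]
    rw [Real.exp_neg]
    field_simp
  -- the auxiliary sequence m
  set m : ℕ → ℕ := fun n => n / k + 1 with hmdef
  have hm0 : ∀ n, ((m n : ℝ)) ≠ 0 := fun n => by
    simp [hmdef]; positivity
  have hmpos : ∀ n, (0:ℝ) < (m n : ℝ) := fun n => by
    have := hm0 n; positivity
  have hm_top : Tendsto m atTop atTop := by
    rw [tendsto_atTop_atTop]
    intro N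
    refine ⟨N * k, fun n hn => ?_⟩
    have h2 : N ≤ n / k := (Nat.le_div_iff_mul_le hkpos).2 hn
    have h3 : m n = n / k + 1 := rfl
    omega
  have hmR_top : Tendsto (fun n : ℕ => ((m n : ℕ) : ℝ)) atTop atTop :=
    tendsto_natCast_atTop_atTop.comp hm_top
  have hmn : Tendsto (fun n : ℕ => (n:ℝ) / (m n)) atTop (𝓝 (k:ℝ)) := by
    have hub : ∀ n : ℕ, (n:ℝ) / (m n) ≤ (k:ℝ) := by
      intro n
      rw [div_le_iff₀ (hmpos n)]
      have h1 : n < k * (m n) := by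
        have hdm := Nat.div_add_mod n k
        have hml : n % k < k := Nat.mod_lt n hkpos
        have h3 : k * (m n) = k * (n / k) + k := by
          rw [show m n = n / k + 1 from rfl]; ring
        omega
      exact_mod_cast h1.le
    have hlb : ∀ n : ℕ, (k:ℝ) - (k:ℝ) / (m n) ≤ (n:ℝ) / (m n) := by
      intro n
      have h1 : k * (m n) ≤ n + k := by
        have h4 : k * (n / k) ≤ n := Nat.mul_div_le n k
        have h3 : m n = n / k + 1 := rfl
        calc k * (m n) = k * (n / k) + k := by rw [h3]; ring
        _ ≤ n + k := by omega
      have h1R : (k:ℝ) * (m n) ≤ (n:ℝ) + k := by exact_mod_cast h1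
      rw [sub_le_iff_le_add, ← add_div, le_div_iff₀ (hmpos n)]
      linarith
    have hlow : Tendsto (fun n : ℕ => (k:ℝ) - (k:ℝ) / (m n)) atTop (𝓝 (k:ℝ)) := by
      have : Tendsto (fun n : ℕ => (k:ℝ) / (m n)) atTop (𝓝 0) :=
        tendsto_const_nhds.div_atTop hmR_top
      have h2 := (tendsto_const_nhds (x := (k:ℝ)) (f := atTop (α := ℕ))).sub this
      simpa using h2
    exact tendsto_of_tendsto_of_tendsto_of_le_of_le hlow tendsto_const_nhds hlb hub
  -- transferred convergence at level m with factor k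
  have hstep1m : ∀ u : ℝ, 0 < u →
      Tendsto (fun n : ℕ => (n:ℝ) * (1 - F (a (m n) * u + b (m n)))) atTop
        (𝓝 ((k:ℝ) * Real.exp (-u))) := by
    intro u hu
    have h1 : Tendsto (fun n : ℕ => ((m n : ℝ)) * (1 - F (a (m n) * u + b (m n)))) atTop
        (𝓝 (Real.exp (-u))) := (step1 u hu).comp hm_top
    have h2 := hmn.mul h1
    apply h2.congr
    intro n
    have := hm0 n
    field_simp
  -- ordering lemmas
  have hord1 : ∀ u x' : ℝ, 0 < u → 0 < x' → (k:ℝ) * Real.exp (-u) < Real.exp (-x') →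
      ∀ᶠ n : ℕ in atTop, a n * x' + b n < a (m n) * u + b (m n) := by
    intro u x' hu hx' hlt
    have hev := (hstep1m u hu).eventually_lt (step1 x' hx') hlt
    filter_upwards [hev, eventually_ge_atTop 1] with n h1 h2
    have hn : (0:ℝ) < n := by exact_mod_cast h2
    have h3 : 1 - F (a (m n) * u + b (m n)) < 1 - F (a n * x' + b n) :=
      lt_of_mul_lt_mul_left h1 hn.le
    have h4 : F (a n * x' + b n) < F (a (m n) * u + b (m n)) := by linarith
    by_contra hc
    push_neg at hc
    exact absurd (hmono hc) (not_le.2 h4)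
  have hord2 : ∀ u x' : ℝ, 0 < u → 0 < x' → Real.exp (-x') < (k:ℝ) * Real.exp (-u) →
      ∀ᶠ n : ℕ in atTop, a (m n) * u + b (m n) < a n * x' + b n := by
    intro u x' hu hx' hlt
    have hev := (step1 x' hx').eventually_lt (hstep1m u hu) hlt
    filter_upwards [hev, eventually_ge_atTop 1] with n h1 h2
    have hn : (0:ℝ) < n := by exact_mod_cast h2
    have h3 : 1 - F (a n * x' + b n) < 1 - F (a (m n) * u + b (m n)) :=
      lt_of_mul_lt_mul_left h1 hn.le
    have h4 : F (a (m n) * u + b (m n)) < F (a n * x' + b n) := by linarith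
    by_contra hc
    push_neg at hc
    exact absurd (hmono hc) (not_le.2 h4)
  -- pinning
  have hpin : ∀ x' : ℝ, 0 < x' →
      Tendsto (fun n : ℕ => (a n * x' + b n - b (m n)) / a (m n)) atTop
        (𝓝 (x' + Real.log k)) := by
    intro x' hx'
    have hlogk : 0 ≤ Real.log k := Real.log_nonneg hk1
    have hL' : 0 < x' + Real.log k := by linarith
    rw [tendsto_order]
    constructor
    · intro c hc
      set u := max c ((x' + Real.log k) / 2) with hudef
      have hu0 : 0 < u := lt_max_of_lt_right (by linarith)
      have huL : u < x' + Real.log k := max_lt hc (by linarith)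
      have hcu : c ≤ u := le_max_left _ _
      have hlt : Real.exp (-x') < (k:ℝ) * Real.exp (-u) := by
        rw [hkexp, Real.exp_lt_exp]; linarith
      filter_upwards [hord2 u x' hu0 hx' hlt] with n hn
      have hap := ha (m n)
      calc c ≤ u := hcu
      _ < (a n * x' + b n - b (m n)) / a (m n) := by
          rw [lt_div_iff₀ hap]; linarith
    · intro c hc
      set u := (x' + Real.log k + c) / 2 with hudef
      have huL : x' + Real.log k < u := by rw [hudef]; linarith
      have hu0 : 0 < u := lt_trans hL' huL
      have huc : u < c := by rw [hudef]; linarith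
      have hlt : (k:ℝ) * Real.exp (-u) < Real.exp (-x') := by
        rw [hkexp, Real.exp_lt_exp]; linarith
      filter_upwards [hord1 u x' hu0 hx' hlt] with n hn
      have hap := ha (m n)
      calc (a n * x' + b n - b (m n)) / a (m n) < u := by
            rw [div_lt_iff₀ hap]; linarith
      _ < c := huc
  -- scale / shift convergence
  have hQA : Tendsto (fun n : ℕ => a n / a (m n)) atTop (𝓝 1) := by
    have h1 := hpin 1 one_pos
    have h2 := hpin 2 two_pos
    have h3 := h2.sub h1
    have heq : ∀ n : ℕ, (a n * 2 + b n - b (m n)) / a (m n)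
        - (a n * 1 + b n - b (m n)) / a (m n) = a n / a (m n) := by
      intro n
      have := (ha (m n)).ne'
      field_simp
      ring
    have h4 : (2 + Real.log k) - (1 + Real.log k) = (1:ℝ) := by ring
    rw [h4] at h3
    exact h3.congr heq
  have hQB : Tendsto (fun n : ℕ => (b n - b (m n)) / a (m n)) atTop (𝓝 (Real.log k)) := by
    have h1 := hpin 1 one_pos
    have h3 := h1.sub hQA
    have heq : ∀ n : ℕ, (a n * 1 + b n - b (m n)) / a (m n) - a n / a (m n)
        = (b n - b (m n)) / a (m n) := by
      intro n
      have := (ha (m n)).ne'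
      field_simp
      ring
    have h4 : (1 + Real.log k) - 1 = Real.log k := by ring
    rw [h4] at h3
    exact h3.congr heq
  have hpinall : Tendsto (fun n : ℕ => (a n * x + b n - b (m n)) / a (m n)) atTop
      (𝓝 (x + Real.log k)) := by
    have h1 := (hQA.const_mul x).add hQB
    rw [mul_one] at h1
    apply h1.congr
    intro n
    have := (ha (m n)).ne'
    field_simp
    ring
  -- final squeeze
  rw [tendsto_order]
  constructor
  · intro c hc
    obtain ⟨u', hu'L, hu'c⟩ : ∃ u', x + Real.log k < u' ∧ c < (k:ℝ) * Real.exp (-u') := by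
      rcases le_or_gt c 0 with hc0 | hc0
      · exact ⟨x + Real.log k + 1, by linarith, lt_of_le_of_lt hc0 (by positivity)⟩
      · refine ⟨(x + Real.log k + (Real.log k - Real.log c)) / 2, ?_, ?_⟩
        · have hlogc : Real.log c < -x := by
            have := Real.log_lt_log hc0 hc
            rwa [Real.log_exp] at this
          linarith
        · rw [hkexp, ← Real.exp_log hc0, Real.exp_lt_exp]
          have hlogc : Real.log c < -x := by
            have := Real.log_lt_log hc0 hc
            rwa [Real.log_exp] at this
          rw [Real.exp_log hc0]
          linarith
    have hu'0 : 0 < u' := lt_trans hL hu'L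
    filter_upwards [(hstep1m u' hu'0).eventually (eventually_gt_nhds hu'c),
      hpinall.eventually (eventually_lt_nhds hu'L),
      eventually_ge_atTop 1] with n h1 h2 h3
    have hap := ha (m n)
    rw [div_lt_iff₀ hap] at h2
    have hpt : a n * x + b n < a (m n) * u' + b (m n) := by linarith
    have hFle := hmono hpt.le
    have hn0 : (0:ℝ) ≤ n := Nat.cast_nonneg n
    nlinarith
  · intro c hc
    have hc0 : 0 < c := lt_trans (Real.exp_pos _) hc
    have hlogc : -x < Real.log c := by
      have := Real.log_lt_log (Real.exp_pos _) hc
      rwa [Real.log_exp] at this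
    obtain ⟨u, hu0, huL, huc⟩ : ∃ u, 0 < u ∧ u < x + Real.log k ∧ (k:ℝ) * Real.exp (-u) < c := by
      refine ⟨(max 0 (Real.log k - Real.log c) + (x + Real.log k)) / 2, ?_, ?_, ?_⟩
      · have := le_max_left (0:ℝ) (Real.log k - Real.log c)
        linarith
      · have h1 : max 0 (Real.log k - Real.log c) < x + Real.log k :=
          max_lt hL (by linarith)
        linarith
      · rw [hkexp, ← Real.exp_log hc0, Real.exp_lt_exp, Real.exp_log hc0]
        have := le_max_right (0:ℝ) (Real.log k - Real.log c)
        linarith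
    filter_upwards [(hstep1m u hu0).eventually (eventually_lt_nhds huc),
      hpinall.eventually (eventually_gt_nhds huL),
      eventually_ge_atTop 1] with n h1 h2 h3
    have hap := ha (m n)
    rw [lt_div_iff₀ hap] at h2
    have hpt : a (m n) * u + b (m n) < a n * x + b n := by linarith
    have hFle := hmono hpt.le
    have hn0 : (0:ℝ) ≤ n := Nat.cast_nonneg n
    nlinarith

lemma freePow_tendsto_of_lin (F : ℝ → ℝ) (a b : ℕ → ℝ) (x : ℝ)
    (hu : Tendsto (fun n : ℕ => (n:ℝ) * (1 - F (a n * x + b n))) atTop (𝓝 (Real.exp (-x)))) :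
    Tendsto (fun n => freePow F n (a n * x + b n)) atTop (𝓝 (expDF x)) := by
  have hcont : Continuous (fun t : ℝ => max (1 - t) 0) :=
    (continuous_const.sub continuous_id).max continuous_const
  have := (hcont.tendsto _).comp hu
  apply this.congr
  intro n
  simp only [Function.comp, freePow]
  congr 1
  ring

lemma pow_tendsto_of_key (F : ℝ → ℝ) (a b : ℕ → ℝ) (x : ℝ)
    (hu : Tendsto (fun n : ℕ => (n:ℝ) * (1 - F (a n * x + b n))) atTop (𝓝 (Real.exp (-x)))) :
    Tendsto (fun n => F (a n * x + b n) ^ n) atTop (𝓝 (Real.exp (-Real.exp (-x)))) := by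
  have := pow_tendsto_of_lin _ _ (Real.exp_pos (-x)) hu
  apply this.congr'
  filter_upwards [eventually_ge_atTop 1] with n hn
  have hn0 : ((n:ℝ)) ≠ 0 := by positivity
  congr 1
  field_simp
  ring

/-- The free max-domain of attraction of the exponential law coincides with
the classical max-domain of attraction of the Gumbel law, with the same
normalizing constants. -/
theorem freeDomAttr_exp_iff_classicalDomAttr_gumbel
    (F : ℝ → ℝ) (hF : IsDistFun F) :
    ((∃ a b : ℕ → ℝ, (∀ n, 0 < a n) ∧
        ∀ x : ℝ, Tendsto (fun n => freePow F n (a n * x + b n)) atTop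
          (𝓝 (expDF x))) ↔
      (∃ a b : ℕ → ℝ, (∀ n, 0 < a n) ∧
        ∀ x : ℝ, Tendsto (fun n => F (a n * x + b n) ^ n) atTop
          (𝓝 (Real.exp (-Real.exp (-x)))))) ∧
    ((∃ a b : ℕ → ℝ, (∀ n, 0 < a n) ∧
        ∀ x : ℝ, Tendsto (fun n => freePow F n (a n * x + b n)) atTop
          (𝓝 (expDF x))) →
      ∃ a b : ℕ → ℝ, (∀ n, 0 < a n) ∧
        (∀ x : ℝ, Tendsto (fun n => freePow F n (a n * x + b n)) atTop
          (𝓝 (expDF x))) ∧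
        (∀ x : ℝ, Tendsto (fun n => F (a n * x + b n) ^ n) atTop
          (𝓝 (Real.exp (-Real.exp (-x)))))) := by
  obtain ⟨hmono, hrc, hbot, htop⟩ := hF
  have hF0 : ∀ t, 0 ≤ F t := by
    intro t
    have hev : ∀ᶠ s in atBot, F s ≤ F t := by
      filter_upwards [eventually_le_atBot t] with s hs using hmono hs
    exact le_of_tendsto hbot hev
  have dirAB : (∃ a b : ℕ → ℝ, (∀ n, 0 < a n) ∧
      ∀ x : ℝ, Tendsto (fun n => freePow F n (a n * x + b n)) atTop (𝓝 (expDF x))) →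
      ∃ a b : ℕ → ℝ, (∀ n, 0 < a n) ∧
        (∀ x : ℝ, Tendsto (fun n => freePow F n (a n * x + b n)) atTop (𝓝 (expDF x))) ∧
        (∀ x : ℝ, Tendsto (fun n => F (a n * x + b n) ^ n) atTop
          (𝓝 (Real.exp (-Real.exp (-x))))) := by
    rintro ⟨a, b, ha, hfree⟩
    refine ⟨a, b, ha, hfree, fun x => ?_⟩
    exact pow_tendsto_of_key F a b x (key F hmono a b ha hfree x)
  have dirBA : (∃ a b : ℕ → ℝ, (∀ n, 0 < a n) ∧
      ∀ x : ℝ, Tendsto (fun n => F (a n * x + b n) ^ n) atTop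
        (𝓝 (Real.exp (-Real.exp (-x))))) →
      ∃ a b : ℕ → ℝ, (∀ n, 0 < a n) ∧
        ∀ x : ℝ, Tendsto (fun n => freePow F n (a n * x + b n)) atTop (𝓝 (expDF x)) := by
    rintro ⟨a, b, ha, hpow⟩
    refine ⟨a, b, ha, fun x => ?_⟩
    have hL0 : 0 < Real.exp (-Real.exp (-x)) := Real.exp_pos _
    have hL1 : Real.exp (-Real.exp (-x)) < 1 := by
      rw [Real.exp_lt_one_iff]
      have := Real.exp_pos (-x)
      linarith
    have hu := lin_tendsto_of_pow (fun n => F (a n * x + b n)) (fun n => hF0 _)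
      _ hL0 hL1 (hpow x)
    rw [Real.log_exp] at hu
    rw [neg_neg] at hu
    exact freePow_tendsto_of_lin F a b x hu
  refine ⟨⟨fun h => ?_, dirBA⟩, dirAB⟩
  obtain ⟨a, b, ha, _, hp⟩ := dirAB h
  exact ⟨a, b, ha, hp⟩
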